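/- Let x ∈ S_{n+1}, m = x^{-1}(0), and let I be any subsequence of (x(m+1),...,x(n)) with greedy decreasing subsequence I_decr and associated cycle σ_I. Then for any p, the condition 'every element of I that is ≥ p occurs among x(0),...,x(q)' holds if and only if 'every element of I_decr that is ≥ p occurs among x(0),...,x(q)', for all q ≥ m. -/

import Mathlib

open Polynomial

/-- Number of inversions (the Coxeter length) of a permutation of `Fin n`. -/
def invCount {n : ℕ} (x : Equiv.Perm (Fin n)) : ℕ :=
  (Finset.univ.filter (fun p : Fin n × Fin n => p.1 < p.2 ∧ x p.2 < x p.1)).card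

/-- Bruhat order on the symmetric group `S_n = Perm (Fin n)`: `x ≤ y` iff there is an
upward path from `x` to `y` in the Bruhat graph (edges: multiplication by a transposition,
oriented by increasing length). -/
def BruhatLE {n : ℕ} (x y : Equiv.Perm (Fin n)) : Prop :=
  Relation.ReflTransGen
    (fun u v => (∃ i j : Fin n, i ≠ j ∧ v = Equiv.swap i j * u) ∧ invCount u < invCount v)
    x y

def BruhatLT {n : ℕ} (x y : Equiv.Perm (Fin n)) : Prop :=
  BruhatLE x y ∧ x ≠ y


/-- with `I` a set of values occurring to the right of `m = x⁻¹(0)` in the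
one-line notation of `x`, and `l = I_decr` the greedy decreasing subsequence of `I`, for
every `p` and every `q ≥ m`: every element of `I` that is `≥ p` occurs among
`x(0), …, x(q)` iff every element of `I_decr` that is `≥ p` occurs among `x(0), …, x(q)`. -/
theorem greedy_same_corner_conditions (n : ℕ) (x : Equiv.Perm (Fin (n + 1)))
    (m : Fin (n + 1)) (hm : x m = 0)
    (I : Finset (Fin (n + 1))) (hI : ∀ a ∈ I, m < x⁻¹ a)
    (l : List (Fin (n + 1)))
    (hmem : ∀ a ∈ l, a ∈ I)
    (hempty : I = ∅ → l = [])
    (hne : I.Nonempty → l ≠ [])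
    (hhead : ∀ h : I.Nonempty, l.head? = some (I.max' h))
    (hstep : ∀ (k : ℕ) (hk1 : k < l.length) (hk2 : k + 1 < l.length)
      (hS : (I.filter (fun a => x⁻¹ (l.get ⟨k, hk1⟩) < x⁻¹ a)).Nonempty),
      l.get ⟨k + 1, hk2⟩ = (I.filter (fun a => x⁻¹ (l.get ⟨k, hk1⟩) < x⁻¹ a)).max' hS)
    (hcont : ∀ (k : ℕ) (hk1 : k < l.length),
      (I.filter (fun a => x⁻¹ (l.get ⟨k, hk1⟩) < x⁻¹ a)).Nonempty → k + 1 < l.length) :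
    ∀ p q : Fin (n + 1), m ≤ q →
      ((∀ a ∈ I, p ≤ a → x⁻¹ a ≤ q) ↔ (∀ a ∈ l, p ≤ a → x⁻¹ a ≤ q)) := by
  intro p q _
  constructor
  · intro h a ha hpa
    exact h a (hmem a ha) hpa
  · intro h a haI hpa
    -- key claim: some element of l dominates a in value and position
    have key : ∀ d k (hk : k < l.length), l.length - k = d → a ≤ l.get ⟨k, hk⟩ →
        ∃ j, ∃ hj : j < l.length, a ≤ l.get ⟨j, hj⟩ ∧
          x⁻¹ a ≤ x⁻¹ (l.get ⟨j, hj⟩) := by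
      intro d
      induction d with
      | zero => intro k hk hd _; omega
      | succ d ih =>
        intro k hk hd hle
        by_cases hpos : x⁻¹ a ≤ x⁻¹ (l.get ⟨k, hk⟩)
        · exact ⟨k, hk, hle, hpos⟩
        · push_neg at hpos
          have hfilt : a ∈ I.filter (fun b => x⁻¹ (l.get ⟨k, hk⟩) < x⁻¹ b) :=
            Finset.mem_filter.2 ⟨haI, hpos⟩
          have hS : (I.filter (fun b => x⁻¹ (l.get ⟨k, hk⟩) < x⁻¹ b)).Nonempty := ⟨a, hfilt⟩
          have hk2 := hcont k hk hS
          have hnext := hstep k hk hk2 hS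
          have hle' : a ≤ l.get ⟨k + 1, hk2⟩ := by
            rw [hnext]; exact Finset.le_max' _ _ hfilt
          exact ih (k + 1) hk2 (by omega) hle'
    have hIne : I.Nonempty := ⟨a, haI⟩
    have hlne := hne hIne
    have h0 : 0 < l.length := List.length_pos_iff.2 hlne
    have hhd : l.get ⟨0, h0⟩ = I.max' hIne := by
      have := hhead hIne
      rwa [List.head?_eq_head hlne, Option.some_inj, ← List.get_mk_zero h0] at this
    have hle0 : a ≤ l.get ⟨0, h0⟩ := by rw [hhd]; exact Finset.le_max' _ _ haI
    obtain ⟨j, hj, hja, hjpos⟩ := key (l.length - 0) 0 h0 rfl hle0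
    have := h (l.get ⟨j, hj⟩) (l.get_mem _) (le_trans hpa hja)
    exact le_trans hjpos this
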